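/- arXiv:1002.2098 — 2 statements merged into one kernel-verified Lean document; each statement's English description precedes it below -/
import Mathlib

section
/- For every set S of positive integers, D(S) ≥ d(S), where d(S) is the lower asymptotic density of S and D(S) = limsup_{T→∞} (1/log T) ∫_{1/T}^1 f_S(t) dt. -/
open MeasureTheory Filter

/-- `f_S(t) = ∑_{n ∈ S} e^{-nt}`. -/
noncomputable def fS (S : Set ℕ) (t : ℝ) : ℝ := ∑' n : S, Real.exp (-(n : ℝ) * t)

/-- Lower asymptotic density of a set of positive integers. -/
noncomputable def lowerDensity (S : Set ℕ) : ℝ :=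
  liminf (fun n : ℕ => ((S ∩ Set.Icc 1 n).ncard : ℝ) / n) atTop

/-- `D(S) = limsup_{T→∞} (1/log T) ∫_{1/T}^1 f_S(t) dt`. -/
noncomputable def DD (S : Set ℕ) : ℝ :=
  limsup (fun T : ℝ => (1 / Real.log T) * ∫ t in (1 / T : ℝ)..1, fS S t) atTop


lemma exp_eq_pow (t : ℝ) (n : ℕ) : Real.exp (-(n : ℝ) * t) = Real.exp (-t) ^ n := by
  rw [show -(n:ℝ)*t = (n:ℝ)*(-t) by ring, Real.exp_nat_mul]

lemma fS_eq_tsum_indicator (S : Set ℕ) (t : ℝ) :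
    fS S t = ∑' n : ℕ, S.indicator (fun n => Real.exp (-t) ^ n) n := by
  calc fS S t = ∑' n : S, Real.exp (-t) ^ (n : ℕ) :=
        tsum_congr (fun n => exp_eq_pow t n)
    _ = _ := tsum_subtype S _

lemma summable_geo {t : ℝ} (ht : 0 < t) : Summable (fun n : ℕ => Real.exp (-t) ^ n) :=
  summable_geometric_of_lt_one (Real.exp_pos _).le (Real.exp_lt_one_iff.2 (by linarith))

lemma summable_fS (S : Set ℕ) {t : ℝ} (ht : 0 < t) :
    Summable (fun n : S => Real.exp (-(n : ℝ) * t)) := by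
  have h : (fun n : S => Real.exp (-(n : ℝ) * t))
      = (fun n : ℕ => Real.exp (-t) ^ n) ∘ (Subtype.val) := funext fun n => exp_eq_pow t n
  rw [h]
  exact summable_subtype_iff_indicator.2 ((summable_geo ht).indicator S)

lemma fS_le (S : Set ℕ) (hS : ∀ n ∈ S, 0 < n) {t : ℝ} (ht : 0 < t) : fS S t ≤ 1 / t := by
  set r := Real.exp (-t) with hrdef
  have hr0 : 0 < r := Real.exp_pos _
  have hr1 : r < 1 := Real.exp_lt_one_iff.2 (by linarith)
  set g : ℕ → ℝ := fun n => if n = 0 then 0 else r ^ n with hgdef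
  have hg_sum : Summable g := by
    apply Summable.of_nonneg_of_le _ _ (summable_geo ht)
    · intro n; by_cases h : n = 0 <;> simp [hgdef, h, pow_nonneg hr0.le]
    · intro n; by_cases h : n = 0 <;> simp [hgdef, h, pow_nonneg hr0.le, hrdef]
  have h1 : fS S t ≤ ∑' n, g n := by
    rw [fS_eq_tsum_indicator]
    apply Summable.tsum_le_tsum _ ((summable_geo ht).indicator S) hg_sum
    intro n
    by_cases h : n ∈ S
    · have : n ≠ 0 := (hS n h).ne'
      simp [Set.indicator_of_mem h, hgdef, this, hrdef]
    · simp only [Set.indicator_of_notMem h]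
      by_cases h0 : n = 0 <;> simp [hgdef, h0, pow_nonneg hr0.le]
  have h2 : ∑' n, g n = r * (1 - r)⁻¹ := by
    rw [Summable.tsum_eq_zero_add hg_sum]
    have h0 : g 0 = 0 := by simp [hgdef]
    have hsucc : ∀ n : ℕ, g (n + 1) = r * r ^ n := by
      intro n
      simp only [hgdef, Nat.succ_ne_zero, if_neg, ite_false]
      rw [pow_succ]; ring
    rw [h0, zero_add, tsum_congr hsucc, tsum_mul_left, tsum_geometric_of_lt_one hr0.le hr1]
  have h3 : r * (1 - r)⁻¹ ≤ 1 / t := by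
    have h1r : 0 < 1 - r := by linarith
    rw [show r * (1-r)⁻¹ = r / (1-r) by rw [div_eq_mul_inv], div_le_div_iff₀ h1r ht, one_mul]
    have hE := Real.add_one_le_exp t
    have hre : r * Real.exp t = 1 := by
      rw [hrdef, ← Real.exp_add]; simp
    nlinarith [hr0]
  linarith

lemma abel_sum (r : ℝ) (δ : ℕ → ℝ) (M : ℕ) :
    ∑ n ∈ Finset.Icc 1 M, δ n * r ^ n
      = ∑ m ∈ Finset.Icc 1 M, (∑ n ∈ Finset.Icc 1 m, δ n) * (r ^ m - r ^ (m + 1))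
        + (∑ n ∈ Finset.Icc 1 M, δ n) * r ^ (M + 1) := by
  induction M with
  | zero => simp
  | succ M ih =>
    have hA : ∑ n ∈ Finset.Icc 1 (M + 1), δ n = ∑ n ∈ Finset.Icc 1 M, δ n + δ (M + 1) :=
      Finset.sum_Icc_succ_top (by omega) _
    rw [Finset.sum_Icc_succ_top (by omega : 1 ≤ M + 1),
        Finset.sum_Icc_succ_top (by omega : 1 ≤ M + 1)
          (fun m => (∑ n ∈ Finset.Icc 1 m, δ n) * (r ^ m - r ^ (m + 1))), hA]
    ring_nf
    ring_nf at ih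
    linear_combination ih

lemma sum_mul_diff (r : ℝ) (M : ℕ) :
    ∑ m ∈ Finset.Icc 1 M, (m : ℝ) * (r ^ m - r ^ (m + 1))
      = ∑ m ∈ Finset.Icc 1 M, r ^ m - (M : ℝ) * r ^ (M + 1) := by
  induction M with
  | zero => simp
  | succ M ih =>
    rw [Finset.sum_Icc_succ_top (by omega : 1 ≤ M + 1),
        Finset.sum_Icc_succ_top (by omega : 1 ≤ M + 1) (fun m => r ^ m)]
    push_cast
    linear_combination ih

lemma key_finite (S : Set ℕ) (a : ℝ) (ha : 0 ≤ a) (N0 : ℕ)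
    (hA : ∀ m : ℕ, N0 ≤ m → a * m ≤ ∑ n ∈ Finset.Icc 1 m, S.indicator (fun _ => (1:ℝ)) n)
    {r t : ℝ} (hr0 : 0 ≤ r) (hr1 : r < 1) (hrt : 1 - r ≤ t) (ht : 0 ≤ t)
    (M : ℕ) (hM : N0 ≤ M) :
    a * ∑ m ∈ Finset.Icc 1 M, r ^ m - a * N0 ^ 2 * t
      ≤ ∑ n ∈ Finset.Icc 1 M, S.indicator (fun n => r ^ n) n := by
  classical
  set δ : ℕ → ℝ := S.indicator (fun _ => (1:ℝ)) with hδ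
  set A : ℕ → ℝ := fun m => ∑ n ∈ Finset.Icc 1 m, δ n with hAdef
  have hind : ∀ n, S.indicator (fun n => r ^ n) n = δ n * r ^ n := by
    intro n
    by_cases h : n ∈ S
    · simp [hδ, Set.indicator_of_mem h]
    · simp [hδ, Set.indicator_of_notMem h]
  have hδ0 : ∀ n, 0 ≤ δ n := Set.indicator_nonneg (fun _ _ => zero_le_one)
  have hA0 : ∀ m, 0 ≤ A m := fun m => Finset.sum_nonneg (fun n _ => hδ0 n)
  have hc0 : ∀ m : ℕ, 0 ≤ r ^ m - r ^ (m + 1) := by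
    intro m
    have h1 : r ^ (m+1) = r ^ m * r := pow_succ r m
    have h2 : (0:ℝ) ≤ r ^ m := pow_nonneg hr0 m
    nlinarith
  have hcle : ∀ m : ℕ, r ^ m - r ^ (m + 1) ≤ t := by
    intro m
    have h1 : r ^ (m+1) = r ^ m * r := pow_succ r m
    have h2 : (0:ℝ) ≤ r ^ m := pow_nonneg hr0 m
    have h3 : r ^ m ≤ 1 := pow_le_one₀ hr0 hr1.le
    nlinarith
  rw [Finset.sum_congr rfl (fun n _ => hind n), abel_sum]
  -- termwise bound
  have hterm : ∀ m ∈ Finset.Icc 1 M,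
      a * m * (r ^ m - r ^ (m + 1)) - (if m < N0 then a * N0 * t else 0)
        ≤ A m * (r ^ m - r ^ (m + 1)) := by
    intro m _
    by_cases h : m < N0
    · simp only [h, if_pos]
      have h1 : a * m * (r ^ m - r ^ (m + 1)) ≤ a * N0 * t := by
        have hm : (m : ℝ) ≤ N0 := by exact_mod_cast h.le
        have h1 : a * m ≤ a * N0 := mul_le_mul_of_nonneg_left hm ha
        have h2 : a * m * (r ^ m - r ^ (m+1)) ≤ a * N0 * (r ^ m - r ^ (m+1)) :=
          mul_le_mul_of_nonneg_right h1 (hc0 m)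
        have h3 : a * N0 * (r ^ m - r ^ (m+1)) ≤ a * N0 * t :=
          mul_le_mul_of_nonneg_left (hcle m) (by positivity)
        linarith
      have h2 : 0 ≤ A m * (r ^ m - r ^ (m + 1)) := mul_nonneg (hA0 m) (hc0 m)
      linarith
    · simp only [h, if_neg, not_false_iff, sub_zero]
      exact mul_le_mul_of_nonneg_right (hA (m) (by omega)) (hc0 m)
  have hsum1 : ∑ m ∈ Finset.Icc 1 M,
        (a * m * (r ^ m - r ^ (m + 1)) - (if m < N0 then a * N0 * t else 0))
      ≤ ∑ m ∈ Finset.Icc 1 M, A m * (r ^ m - r ^ (m + 1)) := Finset.sum_le_sum hterm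
  rw [Finset.sum_sub_distrib] at hsum1
  have herr : ∑ m ∈ Finset.Icc 1 M, (if m < N0 then a * N0 * t else 0)
      ≤ a * N0 ^ 2 * t := by
    rw [← Finset.sum_filter]
    rw [Finset.sum_const]
    have hcard : ((Finset.Icc 1 M).filter (· < N0)).card ≤ N0 := by
      have hsub : (Finset.Icc 1 M).filter (· < N0) ⊆ Finset.range N0 := by
        intro x hx
        simp only [Finset.mem_filter] at hx
        exact Finset.mem_range.2 hx.2
      calc ((Finset.Icc 1 M).filter (· < N0)).card ≤ (Finset.range N0).card :=
            Finset.card_le_card hsub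
        _ = N0 := Finset.card_range N0
    have hC : 0 ≤ a * N0 * t := by positivity
    calc ((Finset.Icc 1 M).filter (· < N0)).card • (a * N0 * t)
        = (((Finset.Icc 1 M).filter (· < N0)).card : ℝ) * (a * N0 * t) := by
          rw [nsmul_eq_mul]
      _ ≤ (N0 : ℝ) * (a * N0 * t) := by
          apply mul_le_mul_of_nonneg_right _ hC
          exact_mod_cast hcard
      _ = a * N0 ^ 2 * t := by ring
  have hmc : ∑ m ∈ Finset.Icc 1 M, a * m * (r ^ m - r ^ (m + 1))
      = a * (∑ m ∈ Finset.Icc 1 M, r ^ m - (M : ℝ) * r ^ (M + 1)) := by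
    rw [← sum_mul_diff, Finset.mul_sum]
    exact Finset.sum_congr rfl (fun m _ => by ring)
  have hlast : a * M * r ^ (M + 1) ≤ A M * r ^ (M + 1) :=
    mul_le_mul_of_nonneg_right (hA M hM) (pow_nonneg hr0 _)
  rw [hmc] at hsum1
  nlinarith [hsum1, herr, hlast]

lemma hcard_eq (S : Set ℕ) (m : ℕ) :
    ((S ∩ Set.Icc 1 m).ncard : ℝ) = ∑ n ∈ Finset.Icc 1 m, S.indicator (fun _ => (1:ℝ)) n := by
  classical
  have h1 : S ∩ Set.Icc 1 m = ↑((Finset.Icc 1 m).filter (· ∈ S)) := by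
    ext n
    simp only [Set.mem_inter_iff, Set.mem_Icc, Finset.coe_filter, Set.mem_setOf_eq,
      Finset.mem_Icc]
    tauto
  rw [h1, Set.ncard_coe_finset]
  have h2 : ∀ n, S.indicator (fun _ => (1:ℝ)) n = if n ∈ S then 1 else 0 := by
    intro n; by_cases h : n ∈ S <;> simp [Set.indicator, h]
  rw [Finset.sum_congr rfl (fun n _ => h2 n), Finset.sum_boole]

lemma fS_ge (S : Set ℕ) (a : ℝ) (ha : 0 ≤ a) (N0 : ℕ)
    (hA : ∀ m : ℕ, N0 ≤ m → a * m ≤ ((S ∩ Set.Icc 1 m).ncard : ℝ))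
    {t : ℝ} (ht : 0 < t) (ht1 : t ≤ 1) :
    a / t - a * (1 + N0 ^ 2) ≤ fS S t := by
  set r := Real.exp (-t) with hrdef
  have hr0 : 0 < r := Real.exp_pos _
  have hr1 : r < 1 := Real.exp_lt_one_iff.2 (by linarith)
  have hrt : 1 - r ≤ t := by
    have := Real.add_one_le_exp (-t)
    linarith
  have hA' : ∀ m : ℕ, N0 ≤ m → a * m ≤ ∑ n ∈ Finset.Icc 1 m, S.indicator (fun _ => (1:ℝ)) n := by
    intro m hm; rw [← hcard_eq]; exact hA m hm
  have hsumInd : Summable (S.indicator (fun n : ℕ => r ^ n)) := (summable_geo ht).indicator S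
  have key : ∀ M : ℕ, N0 ≤ M →
      a * ∑ m ∈ Finset.Icc 1 M, r ^ m - a * N0 ^ 2 * t ≤ fS S t := by
    intro M hM
    refine le_trans (key_finite S a ha N0 hA' hr0.le hr1 hrt ht.le M hM) ?_
    rw [fS_eq_tsum_indicator]
    exact Summable.sum_le_tsum (Finset.Icc 1 M)
      (fun i _ => Set.indicator_nonneg (fun n _ => pow_nonneg hr0.le n) i) hsumInd
  -- limit
  have hre : ∀ M : ℕ, ∑ m ∈ Finset.Icc 1 M, r ^ m = ∑ i ∈ Finset.range M, r ^ (1 + i) := by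
    intro M
    rw [← Finset.Ico_add_one_right_eq_Icc, Finset.sum_Ico_eq_sum_range]
    simp
  have hsum1 : Summable (fun i : ℕ => r ^ (1 + i)) := by
    have h := (summable_geo ht).mul_left r
    refine h.congr (fun i => ?_)
    rw [pow_add, pow_one]
  have htsum1 : ∑' i : ℕ, r ^ (1 + i) = r * (1 - r)⁻¹ := by
    calc ∑' i : ℕ, r ^ (1 + i) = ∑' i : ℕ, r * r ^ i := by
          refine tsum_congr (fun i => ?_); rw [pow_add, pow_one]
      _ = r * (1 - r)⁻¹ := by rw [tsum_mul_left, tsum_geometric_of_lt_one hr0.le hr1]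
  have hgeo : Tendsto (fun M : ℕ => ∑ m ∈ Finset.Icc 1 M, r ^ m) atTop (nhds (r * (1 - r)⁻¹)) := by
    rw [show (fun M : ℕ => ∑ m ∈ Finset.Icc 1 M, r ^ m)
        = fun M : ℕ => ∑ i ∈ Finset.range M, r ^ (1 + i) from funext hre, ← htsum1]
    exact hsum1.hasSum.tendsto_sum_nat
  have hten : Tendsto (fun M : ℕ => a * ∑ m ∈ Finset.Icc 1 M, r ^ m - a * N0 ^ 2 * t) atTop
      (nhds (a * (r * (1 - r)⁻¹) - a * N0 ^ 2 * t)) :=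
    (hgeo.const_mul a).sub_const _
  have hlim : a * (r * (1 - r)⁻¹) - a * N0 ^ 2 * t ≤ fS S t :=
    le_of_tendsto hten (eventually_atTop.2 ⟨N0, key⟩)
  -- final algebra
  have h1r : 0 < 1 - r := by linarith
  have hfrac : (1 - t) / t ≤ r / (1 - r) := by
    rw [div_le_div_iff₀ ht h1r]
    nlinarith
  have hfrac' : a * ((1 - t) / t) ≤ a * (r * (1 - r)⁻¹) := by
    rw [show r * (1-r)⁻¹ = r / (1-r) by rw [div_eq_mul_inv]]
    exact mul_le_mul_of_nonneg_left hfrac ha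
  have heq : a * ((1 - t) / t) = a / t - a := by
    field_simp
  have hN0t : a * N0 ^ 2 * t ≤ a * N0 ^ 2 := by
    nlinarith [sq_nonneg (N0:ℝ), mul_nonneg ha (sq_nonneg (N0:ℝ))]
  linarith [hlim, hfrac', hN0t]

lemma fS_antitone (S : Set ℕ) {lo : ℝ} (hlo : 0 < lo) {hi : ℝ} :
    AntitoneOn (fS S) (Set.Icc lo hi) := by
  intro x hx y hy hxy
  have hx0 : 0 < x := lt_of_lt_of_le hlo hx.1
  have hy0 : 0 < y := lt_of_lt_of_le hlo hy.1
  apply Summable.tsum_le_tsum _ (summable_fS S hy0) (summable_fS S hx0)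
  intro n
  apply Real.exp_le_exp.2
  have hn : (0:ℝ) ≤ (n:ℝ) := Nat.cast_nonneg _
  nlinarith

lemma intervalIntegrable_fS (S : Set ℕ) {T : ℝ} (hT : 1 < T) :
    IntervalIntegrable (fS S) volume (1 / T) 1 := by
  have hlo0 : 0 < 1 / T := by positivity
  have hlo1 : 1 / T ≤ 1 := by
    rw [div_le_one (by linarith)]; linarith
  apply AntitoneOn.intervalIntegrable
  rw [Set.uIcc_of_le hlo1]
  exact fS_antitone S hlo0

lemma intervalIntegrable_inv' {T : ℝ} (hT : 1 < T) :
    IntervalIntegrable (fun t : ℝ => t⁻¹) volume (1 / T) 1 := by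
  have hlo0 : 0 < 1 / T := by positivity
  have hlo1 : 1 / T ≤ 1 := by rw [div_le_one (by linarith)]; linarith
  apply ContinuousOn.intervalIntegrable
  apply ContinuousOn.inv₀ continuousOn_id
  intro x hx
  rw [Set.uIcc_of_le hlo1] at hx
  exact ne_of_gt (lt_of_lt_of_le hlo0 hx.1)

lemma integral_inv_eq {T : ℝ} (hT : 1 < T) :
    ∫ t in (1 / T : ℝ)..1, t⁻¹ = Real.log T := by
  have hlo0 : 0 < 1 / T := by positivity
  rw [integral_inv (Set.notMem_uIcc_of_lt hlo0 one_pos), one_div_one_div]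

lemma integral_fS_le (S : Set ℕ) (hS : ∀ n ∈ S, 0 < n) {T : ℝ} (hT : 1 < T) :
    ∫ t in (1 / T : ℝ)..1, fS S t ≤ Real.log T := by
  have hlo0 : 0 < 1 / T := by positivity
  have hlo1 : 1 / T ≤ 1 := by rw [div_le_one (by linarith)]; linarith
  calc ∫ t in (1 / T : ℝ)..1, fS S t ≤ ∫ t in (1 / T : ℝ)..1, t⁻¹ := by
        apply intervalIntegral.integral_mono_on hlo1 (intervalIntegrable_fS S hT)
          (intervalIntegrable_inv' hT)
        intro x hx
        have hx0 : 0 < x := lt_of_lt_of_le hlo0 hx.1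
        have := fS_le S hS hx0
        rwa [one_div] at this
    _ = Real.log T := integral_inv_eq hT

lemma integral_fS_ge (S : Set ℕ) (a : ℝ) (ha : 0 ≤ a) (N0 : ℕ)
    (hA : ∀ m : ℕ, N0 ≤ m → a * m ≤ ((S ∩ Set.Icc 1 m).ncard : ℝ))
    {T : ℝ} (hT : 1 < T) :
    a * Real.log T - a * (1 + N0 ^ 2) ≤ ∫ t in (1 / T : ℝ)..1, fS S t := by
  have hlo0 : 0 < 1 / T := by positivity
  have hlo1 : 1 / T ≤ 1 := by rw [div_le_one (by linarith)]; linarith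
  have hint1 : IntervalIntegrable (fun t : ℝ => a * t⁻¹) volume (1 / T) 1 :=
    (intervalIntegrable_inv' hT).const_mul a
  have hint2 : IntervalIntegrable (fun t : ℝ => a * t⁻¹ - a * (1 + N0 ^ 2)) volume (1 / T) 1 :=
    hint1.sub intervalIntegrable_const
  have hmono : ∫ t in (1 / T : ℝ)..1, (a * t⁻¹ - a * (1 + N0 ^ 2))
      ≤ ∫ t in (1 / T : ℝ)..1, fS S t := by
    apply intervalIntegral.integral_mono_on hlo1 hint2 (intervalIntegrable_fS S hT)
    intro x hx
    have hx0 : 0 < x := lt_of_lt_of_le hlo0 hx.1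
    have := fS_ge S a ha N0 hA hx0 hx.2
    rw [div_eq_mul_inv] at this
    linarith
  have hcalc : ∫ t in (1 / T : ℝ)..1, (a * t⁻¹ - a * (1 + N0 ^ 2))
      = a * Real.log T - a * (1 + N0 ^ 2) * (1 - 1 / T) := by
    rw [intervalIntegral.integral_sub hint1 intervalIntegrable_const,
      intervalIntegral.integral_const_mul, integral_inv_eq hT,
      intervalIntegral.integral_const, smul_eq_mul]
    ring
  have hC : 0 ≤ a * (1 + N0 ^ 2) := by positivity
  have h1 : a * (1 + N0 ^ 2) * (1 - 1 / T) ≤ a * (1 + N0 ^ 2) := by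
    nlinarith [hlo0]
  linarith

lemma DD_bddAbove (S : Set ℕ) (hS : ∀ n ∈ S, 0 < n) :
    IsBoundedUnder (· ≤ ·) atTop
      (fun T : ℝ => (1 / Real.log T) * ∫ t in (1 / T : ℝ)..1, fS S t) := by
  refine ⟨1, eventually_map.2 ?_⟩
  filter_upwards [eventually_gt_atTop (1:ℝ)] with T hT
  have hlog : 0 < Real.log T := Real.log_pos hT
  have h := integral_fS_le S hS hT
  calc (1 / Real.log T) * ∫ t in (1 / T : ℝ)..1, fS S t
      ≤ (1 / Real.log T) * Real.log T := by
        apply mul_le_mul_of_nonneg_left h (by positivity)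
    _ = 1 := by field_simp

theorem DD_ge_lowerDensity (S : Set ℕ) (hS : ∀ n ∈ S, 0 < n) :
    lowerDensity S ≤ DD S := by
  have main : ∀ a' : ℝ, a' < lowerDensity S → a' ≤ DD S := by
    intro a' ha'
    set a : ℝ := max a' 0 with hadef
    have ha0 : 0 ≤ a := le_max_right _ _
    have haa' : a' ≤ a := le_max_left _ _
    -- get N0
    have hN : ∃ N0 : ℕ, 1 ≤ N0 ∧ ∀ m : ℕ, N0 ≤ m → a * m ≤ ((S ∩ Set.Icc 1 m).ncard : ℝ) := by
      by_cases hcase : a' ≤ 0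
      · refine ⟨1, le_refl 1, fun m hm => ?_⟩
        have : a = 0 := max_eq_right hcase
        rw [this, zero_mul]
        positivity
      · push_neg at hcase
        have haeq : a = a' := max_eq_left hcase.le
        have halt : a < lowerDensity S := by rw [haeq]; exact ha'
        have hbdd : IsBoundedUnder (· ≥ ·) atTop
            (fun n : ℕ => ((S ∩ Set.Icc 1 n).ncard : ℝ) / n) := by
          refine ⟨0, eventually_map.2 ?_⟩
          filter_upwards with n
          positivity
        have hev := eventually_lt_of_lt_liminf halt hbdd
        rw [eventually_atTop] at hev
        obtain ⟨N1, hN1⟩ := hev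
        refine ⟨max N1 1, le_max_right _ _, fun m hm => ?_⟩
        have hm1 : 1 ≤ m := le_trans (le_max_right _ _) hm
        have hmN1 : N1 ≤ m := le_trans (le_max_left _ _) hm
        have h := hN1 m hmN1
        have hm0 : (0:ℝ) < m := by exact_mod_cast hm1
        rw [lt_div_iff₀ hm0] at h
        linarith
    obtain ⟨N0, hN01, hA⟩ := hN
    -- a ≤ DD S
    have haDD : a ≤ DD S := by
      by_contra hcon
      push_neg at hcon
      obtain ⟨b, hb1, hb2⟩ := exists_between hcon
      have hble : b ≤ DD S := by
        apply le_limsup_of_frequently_le _ (DD_bddAbove S hS)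
        apply Eventually.frequently
        have htend : Tendsto (fun T : ℝ => a - a * (1 + N0 ^ 2) * (Real.log T)⁻¹) atTop
            (nhds (a - a * (1 + N0 ^ 2) * 0)) :=
          tendsto_const_nhds.sub
            (tendsto_const_nhds.mul (tendsto_inv_atTop_zero.comp Real.tendsto_log_atTop))
        rw [mul_zero, sub_zero] at htend
        filter_upwards [eventually_gt_atTop (1:ℝ), htend.eventually (eventually_gt_nhds hb2)]
          with T hT hT2
        have hlog : 0 < Real.log T := Real.log_pos hT
        have h := integral_fS_ge S a ha0 N0 hA hT
        have h2 : (1 / Real.log T) * (a * Real.log T - a * (1 + N0 ^ 2))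
            ≤ (1 / Real.log T) * ∫ t in (1 / T : ℝ)..1, fS S t :=
          mul_le_mul_of_nonneg_left h (by positivity)
        have h3 : (1 / Real.log T) * (a * Real.log T - a * (1 + N0 ^ 2))
            = a - a * (1 + N0 ^ 2) * (Real.log T)⁻¹ := by
          field_simp
        rw [h3] at h2
        linarith
      linarith
    linarith
  by_contra hcon
  push_neg at hcon
  obtain ⟨b, hb1, hb2⟩ := exists_between hcon
  have := main b hb2
  linarith
end

section
/- If a set S of positive integers satisfies |S ∩ [1,n]| > δn for all n ≥ N, then for all t > 0, f_S(t) ≥ δ·e^{-Nt}/(1 − e^{-t}). -/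
open scoped ENNReal NNReal


/-- Auxiliary: summing a function supported on `{m | n ≤ m}` is summing the shifted function. -/
lemma tsum_ite_ge_eq (g : ℕ → ℝ≥0∞) (n : ℕ) :
    ∑' m : ℕ, (if n ≤ m then g m else 0) = ∑' k : ℕ, g (n + k) := by
  apply tsum_eq_tsum_of_ne_zero_bij (fun k => n + k.1)
  · intro a b h
    exact Subtype.ext (Nat.add_left_cancel h)
  · intro m hm
    have hnm : n ≤ m := by
      by_contra h
      simp [h] at hm
    have hgm : g m ≠ 0 := by
      simpa [hnm] using hm
    refine ⟨⟨m - n, ?_⟩, ?_⟩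
    · simpa [Nat.add_sub_cancel' hnm] using hgm
    · simp [Nat.add_sub_cancel' hnm]
  · intro k
    simp

/-- Auxiliary: tail geometric sum identity in `ℝ≥0∞`. -/
lemma tsum_tail_geometric (X : ℝ≥0∞) (hX : X < 1) (n : ℕ) :
    ∑' m : ℕ, (if n ≤ m then (1 - X) * X ^ m else 0) = X ^ n := by
  have hY0 : (1 - X) ≠ 0 := by
    simpa [tsub_eq_zero_iff_le] using hX.not_ge
  have hYtop : (1 - X) ≠ ⊤ :=
    ne_top_of_le_ne_top ENNReal.one_ne_top tsub_le_self
  rw [tsum_ite_ge_eq]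
  have h2 : ∀ k : ℕ, (1 - X) * X ^ (n + k) = ((1 - X) * X ^ n) * X ^ k := by
    intro k
    rw [pow_add]
    ring
  simp only [h2]
  rw [ENNReal.tsum_mul_left, ENNReal.tsum_geometric,
    mul_comm (1 - X) (X ^ n), mul_assoc, ENNReal.mul_inv_cancel hY0 hYtop, mul_one]

theorem fS_lower_bound (S : Set ℕ) (δ : ℝ) (hδ : 0 < δ) (N : ℕ) (hN : 0 < N)
    (hS : ∀ n : ℕ, N ≤ n → δ * n < (S ∩ Set.Icc 1 n).ncard)
    (t : ℝ) (ht : 0 < t) :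
    δ * Real.exp (-(N : ℝ) * t) / (1 - Real.exp (-t)) ≤ fS S t := by
  classical
  have hx0 : 0 < Real.exp (-t) := Real.exp_pos _
  set x : ℝ := Real.exp (-t) with hxdef
  have hx1 : x < 1 := by
    rw [hxdef]
    exact Real.exp_lt_one_iff.mpr (by linarith)
  have h1x : (0:ℝ) < 1 - x := by linarith
  have hexp : ∀ n : ℕ, Real.exp (-(n : ℝ) * t) = x ^ n := by
    intro n
    rw [show -(n : ℝ) * t = (n : ℕ) * (-t) by ring, Real.exp_nat_mul]
  have hsum : Summable (fun n : ℕ => x ^ n) := summable_geometric_of_lt_one hx0.le hx1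
  -- pass to ℝ≥0∞
  set X : ℝ≥0∞ := ENNReal.ofReal x with hXdef
  set D : ℝ≥0∞ := ENNReal.ofReal δ with hDdef
  have hX1 : X < 1 := by
    rw [hXdef]
    exact ENNReal.ofReal_lt_one.mpr hx1
  have hY : (1 : ℝ≥0∞) - X = ENNReal.ofReal (1 - x) := by
    rw [ENNReal.ofReal_sub 1 hx0.le, ENNReal.ofReal_one]
  have hfs : ENNReal.ofReal (fS S t) = ∑' n : S, X ^ (n : ℕ) := by
    have h1 : fS S t = ∑' n : S, x ^ (n : ℕ) := tsum_congr fun n => hexp n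
    rw [h1, ENNReal.ofReal_tsum_of_nonneg (f := fun n : S => x ^ (n : ℕ)) (fun n => pow_nonneg hx0.le _) (hsum.subtype S)]
    exact tsum_congr fun n => ENNReal.ofReal_pow hx0.le _
  -- the double counting function
  set F : ℕ → ℕ → ℝ≥0∞ := fun n m => if n ∈ S ∧ 1 ≤ n ∧ n ≤ m then (1 - X) * X ^ m else 0
    with hFdef
  have hrow : ∀ n : ℕ, ∑' m : ℕ, F n m = if n ∈ S ∧ 1 ≤ n then X ^ n else 0 := by
    intro n
    by_cases h : n ∈ S ∧ 1 ≤ n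
    · rw [if_pos h, ← tsum_tail_geometric X hX1 n]
      exact tsum_congr fun m => by simp [hFdef, h.1, h.2]
    · rw [if_neg h]
      refine ENNReal.tsum_eq_zero.mpr fun m => ?_
      rw [hFdef]
      simp only []
      rw [if_neg]
      rintro ⟨h1, h2, h3⟩
      exact h ⟨h1, h2⟩
  have hcol : ∀ m : ℕ, ∑' n : ℕ, F n m
      = ((S ∩ Set.Icc 1 m).ncard : ℝ≥0∞) * ((1 - X) * X ^ m) := by
    intro m
    have hfin : (S ∩ Set.Icc 1 m).Finite :=
      (Set.finite_Icc 1 m).subset Set.inter_subset_right |>.subset (le_refl _)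
    have hind : ∀ n : ℕ, F n m
        = Set.indicator (S ∩ Set.Icc 1 m) (fun _ => (1 - X) * X ^ m) n := by
      intro n
      rw [hFdef]
      by_cases h : n ∈ S ∩ Set.Icc 1 m
      · rw [Set.indicator_of_mem h]
        obtain ⟨h1, h2, h3⟩ := h
        simp [h1, h2, h3]
      · rw [Set.indicator_of_notMem h]
        simp only []
        rw [if_neg]
        intro hc
        exact h ⟨hc.1, hc.2.1, hc.2.2⟩
    calc ∑' n : ℕ, F n m
        = ∑' n : ℕ, Set.indicator (S ∩ Set.Icc 1 m) (fun _ => (1 - X) * X ^ m) n :=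
          tsum_congr hind
      _ = ∑' n : (S ∩ Set.Icc 1 m : Set ℕ), (1 - X) * X ^ m := (tsum_subtype _ _).symm
      _ = ((S ∩ Set.Icc 1 m).ncard : ℝ≥0∞) * ((1 - X) * X ^ m) := by
          have := hfin.fintype
          rw [tsum_fintype, Finset.sum_const, nsmul_eq_mul]
          congr 1
          rw [← Nat.card_coe_set_eq, Nat.card_eq_fintype_card]
          simp
  -- value of ∑ (k+1) x^k
  have hs1 : Summable (fun n : ℕ => (n : ℝ) * x ^ n) := by
    have := summable_pow_mul_geometric_of_norm_lt_one (R := ℝ) 1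
      (r := x) (by rwa [Real.norm_eq_abs, abs_of_pos hx0])
    simpa using this
  have hgeom2 : ∑' k : ℕ, ((k : ℝ) + 1) * x ^ k = 1 / (1 - x) ^ 2 := by
    have h1 : ∑' n : ℕ, (n : ℝ) * x ^ n = x / (1 - x) ^ 2 :=
      tsum_coe_mul_geometric_of_norm_lt_one (by rwa [Real.norm_eq_abs, abs_of_pos hx0])
    have h2 : ∑' n : ℕ, x ^ n = (1 - x)⁻¹ := tsum_geometric_of_lt_one hx0.le hx1
    have h3 : ∀ k : ℕ, ((k : ℝ) + 1) * x ^ k = (k : ℝ) * x ^ k + x ^ k := fun k => by ring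
    rw [tsum_congr h3, Summable.tsum_add hs1 hsum, h1, h2]
    field_simp
    ring
  have hsum2 : Summable (fun k : ℕ => ((k : ℝ) + 1) * x ^ k) := by
    have h3 : ∀ k : ℕ, ((k : ℝ) + 1) * x ^ k = (k : ℝ) * x ^ k + x ^ k := fun k => by ring
    exact (funext h3 : _) ▸ hs1.add hsum
  have hEgeom2 : ∑' k : ℕ, ((k : ℝ≥0∞) + 1) * X ^ k = ENNReal.ofReal (1 / (1 - x) ^ 2) := by
    rw [← hgeom2, ENNReal.ofReal_tsum_of_nonneg
      (fun k => by positivity) hsum2]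
    refine tsum_congr fun k => ?_
    rw [ENNReal.ofReal_mul (by positivity), ENNReal.ofReal_pow hx0.le]
    congr 1
    rw [ENNReal.ofReal_add (Nat.cast_nonneg k) zero_le_one, ENNReal.ofReal_natCast,
      ENNReal.ofReal_one]
  -- main chain
  have main : ENNReal.ofReal (δ * x ^ N / (1 - x)) ≤ ENNReal.ofReal (fS S t) := by
    have hL : ENNReal.ofReal (δ * x ^ N / (1 - x)) = D * X ^ N * (1 - X)⁻¹ := by
      rw [ENNReal.ofReal_div_of_pos h1x, ENNReal.ofReal_mul hδ.le, ENNReal.ofReal_pow hx0.le,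
        hY, div_eq_mul_inv]
    rw [hL, hfs]
    calc D * X ^ N * (1 - X)⁻¹
        = D * (1 - X) * X ^ N * ENNReal.ofReal (1 / (1 - x) ^ 2) := by
          have : (1 - X) * ENNReal.ofReal (1 / (1 - x) ^ 2) = (1 - X)⁻¹ := by
            rw [hY, ← ENNReal.ofReal_mul h1x.le]
            rw [show (1 - x) * (1 / (1 - x) ^ 2) = (1 - x)⁻¹ by field_simp]
            exact ENNReal.ofReal_inv_of_pos h1x
          calc D * X ^ N * (1 - X)⁻¹
              = D * X ^ N * ((1 - X) * ENNReal.ofReal (1 / (1 - x) ^ 2)) := by rw [this]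
            _ = D * (1 - X) * X ^ N * ENNReal.ofReal (1 / (1 - x) ^ 2) := by ring
      _ = ∑' k : ℕ, D * ((k : ℝ≥0∞) + 1) * ((1 - X) * X ^ (N + k)) := by
          rw [← hEgeom2, ← ENNReal.tsum_mul_left]
          refine tsum_congr fun k => ?_
          rw [pow_add]
          ring
      _ ≤ ∑' k : ℕ, D * ((N + k : ℕ) : ℝ≥0∞) * ((1 - X) * X ^ (N + k)) := by
          refine ENNReal.tsum_le_tsum fun k => ?_
          refine mul_le_mul_left (mul_le_mul_right ?_ D) _
          push_cast
          have : (1 : ℝ≥0∞) ≤ (N : ℝ≥0∞) := by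
            exact_mod_cast Nat.one_le_cast.mpr hN
          calc (k : ℝ≥0∞) + 1 ≤ (k : ℝ≥0∞) + N := by gcongr
            _ = (N : ℝ≥0∞) + k := by ring
      _ = ∑' m : ℕ, (if N ≤ m then D * (m : ℝ≥0∞) * ((1 - X) * X ^ m) else 0) := by
          rw [tsum_ite_ge_eq]
      _ ≤ ∑' m : ℕ, ((S ∩ Set.Icc 1 m).ncard : ℝ≥0∞) * ((1 - X) * X ^ m) := by
          refine ENNReal.tsum_le_tsum fun m => ?_
          by_cases hm : N ≤ m
          · rw [if_pos hm]
            refine mul_le_mul_left ?_ _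
            have h := (hS m hm).le
            calc D * (m : ℝ≥0∞) = ENNReal.ofReal (δ * m) := by
                  rw [ENNReal.ofReal_mul hδ.le, ENNReal.ofReal_natCast]
              _ ≤ ENNReal.ofReal ((S ∩ Set.Icc 1 m).ncard : ℝ) := ENNReal.ofReal_le_ofReal h
              _ = ((S ∩ Set.Icc 1 m).ncard : ℝ≥0∞) := ENNReal.ofReal_natCast _
          · rw [if_neg hm]
            exact zero_le
      _ = ∑' m : ℕ, ∑' n : ℕ, F n m := by
          exact tsum_congr fun m => (hcol m).symm
      _ = ∑' n : ℕ, ∑' m : ℕ, F n m := ENNReal.tsum_comm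
      _ = ∑' n : ℕ, (if n ∈ S ∧ 1 ≤ n then X ^ n else 0) := tsum_congr hrow
      _ ≤ ∑' n : ℕ, Set.indicator S (fun n => X ^ n) n := by
          refine ENNReal.tsum_le_tsum fun n => ?_
          by_cases h : n ∈ S ∧ 1 ≤ n
          · rw [if_pos h, Set.indicator_of_mem h.1]
          · rw [if_neg h]
            exact zero_le
      _ = ∑' n : S, X ^ (n : ℕ) := (tsum_subtype S fun n => X ^ n).symm
  have hfs_nonneg : 0 ≤ fS S t := tsum_nonneg fun n => (Real.exp_pos _).le
  have hfin := (ENNReal.ofReal_le_ofReal_iff hfs_nonneg).mp main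
  rw [hexp N]
  exact hfin
end
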